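/- Let h₁, h₂ ∈ ℂ^M be nonzero, σ² > 0, r₁, r₂ ≥ 0, and c ∈ [0,1]. Define φ₁² = (r₁σ²/‖h₁‖²)·1/(1+r₂(1−c))², φ₂² = r₂σ²/‖h₂‖² + (r₁σ²/‖h₁‖²)·r₂c/(1+r₂(1−c))², and F = φ₁²((1+r₂)² − (2+r₂)r₂c) + φ₂². Then F ≤ σ²r₁(1+r₂)/‖h₁‖² + σ²r₂/‖h₂‖². -/
import Mathlib


open scoped InnerProductSpace

/-- Proposition 3 of the paper: an upper bound on the NOMA transmission power
`F = φ₁²((1+r₂)² − (2+r₂)r₂c) + φ₂²`. -/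
theorem stmt_2 (M : ℕ) (h₁ h₂ : EuclideanSpace ℂ (Fin M)) (hh₁ : h₁ ≠ 0) (hh₂ : h₂ ≠ 0)
    (σsq r₁ r₂ c : ℝ) (hσ : 0 < σsq) (hr₁ : 0 ≤ r₁) (hr₂ : 0 ≤ r₂)
    (hc0 : 0 ≤ c) (hc1 : c ≤ 1) :
    (r₁ * σsq / ‖h₁‖ ^ 2) * (1 / (1 + r₂ * (1 - c)) ^ 2) *
        ((1 + r₂) ^ 2 - (2 + r₂) * r₂ * c) +
      (r₂ * σsq / ‖h₂‖ ^ 2 +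
        (r₁ * σsq / ‖h₁‖ ^ 2) * (r₂ * c / (1 + r₂ * (1 - c)) ^ 2))
      ≤ σsq * r₁ * (1 + r₂) / ‖h₁‖ ^ 2 + σsq * r₂ / ‖h₂‖ ^ 2 := by
  have hn1 : (0:ℝ) < ‖h₁‖ ^ 2 := pow_pos (norm_pos_iff.mpr hh₁) 2
  set A : ℝ := r₁ * σsq / ‖h₁‖ ^ 2 with hAdef
  have hA : 0 ≤ A := by positivity
  set d : ℝ := 1 + r₂ * (1 - c) with hddef
  have hd1 : 1 ≤ d := by nlinarith
  have hd0 : (0:ℝ) < d := by linarith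
  have key : A * (1 / d ^ 2) * ((1 + r₂) ^ 2 - (2 + r₂) * r₂ * c)
      + A * (r₂ * c / d ^ 2) = A * (1 + r₂) / d := by
    field_simp
    ring
  have hb : A * (1 + r₂) / d ≤ A * (1 + r₂) := by
    rw [div_le_iff₀ hd0]
    nlinarith [mul_nonneg hA (by linarith : (0:ℝ) ≤ 1 + r₂)]
  have hrhs : σsq * r₁ * (1 + r₂) / ‖h₁‖ ^ 2 = A * (1 + r₂) := by
    rw [hAdef]; ring
  have h2eq : r₂ * σsq / ‖h₂‖ ^ 2 = σsq * r₂ / ‖h₂‖ ^ 2 := by ring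
  linarith
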